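/- Let F = (f_1,...,f_k) be a spherical tight frame for E^n, let d = gcd(n,k) and k' = k/d. If F is orthodecomposable via a subset A (i.e., (f_i)_{i∈A} is a tight frame for a subspace V and (f_i)_{i∉A} is a tight frame for V^⊥), then |A| is a multiple of k'. In particular, if gcd(n,k) = 1 then no spherical tight frame of k vectors in E^n is orthodecomposable. -/

import Mathlib

open scoped BigOperators

lemma parseval_sub {𝕜 : Type*} [RCLike 𝕜] {n : ℕ}
    (V : Submodule 𝕜 (EuclideanSpace 𝕜 (Fin n))) (x : V) :
    ∑ j, ‖(inner 𝕜 ((stdOrthonormalBasis 𝕜 V) j : EuclideanSpace 𝕜 (Fin n))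
        (x : EuclideanSpace 𝕜 (Fin n)) : 𝕜)‖ ^ 2 = ‖(x : EuclideanSpace 𝕜 (Fin n))‖ ^ 2 := by
  set b := stdOrthonormalBasis 𝕜 V
  have h1 : ∀ j, (inner 𝕜 ((b j : EuclideanSpace 𝕜 (Fin n))) (x : EuclideanSpace 𝕜 (Fin n)) : 𝕜)
      = b.repr x j := by
    intro j
    rw [b.repr_apply_apply]
    rfl
  simp_rw [h1]
  have h2 : ‖(x : EuclideanSpace 𝕜 (Fin n))‖ = ‖b.repr x‖ := by
    rw [b.repr.norm_map x, Submodule.norm_coe]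
  rw [h2, ← PiLp.norm_sq_eq_of_L2]

-- main divisibility step
lemma main_step {𝕜 : Type*} [RCLike 𝕜] {n k : ℕ} (hn : 0 < n) (hk : 0 < k)
    (f : Fin k → EuclideanSpace 𝕜 (Fin n))
    (hunit : ∀ j, ‖f j‖ = 1)
    (htight : ∀ v : EuclideanSpace 𝕜 (Fin n),
      ∑ j, ‖(inner 𝕜 v (f j) : 𝕜)‖ ^ 2 = ((k : ℝ) / n) * ‖v‖ ^ 2)
    (A : Finset (Fin k))
    (h : ∃ V : Submodule 𝕜 (EuclideanSpace 𝕜 (Fin n)),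
        (∀ i ∈ A, f i ∈ V) ∧ (∀ i ∉ A, f i ∈ Vᗮ) ∧
        (∃ c > (0 : ℝ), ∀ v ∈ V, ∑ i ∈ A, ‖(inner 𝕜 v (f i) : 𝕜)‖ ^ 2 = c * ‖v‖ ^ 2) ∧
        (∃ c > (0 : ℝ), ∀ v ∈ Vᗮ, ∑ i ∈ Aᶜ, ‖(inner 𝕜 v (f i) : 𝕜)‖ ^ 2 = c * ‖v‖ ^ 2)) :
    (k / Nat.gcd n k) ∣ A.card := by
  obtain ⟨V, hmem, horth, ⟨c, hc0, hc⟩, -⟩ := h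
  rcases A.eq_empty_or_nonempty with rfl | ⟨i₀, hi₀⟩
  · simp
  -- key natural-number identity: n * A.card = k * finrank V
  set m := Module.finrank 𝕜 V with hm
  set b := stdOrthonormalBasis 𝕜 V with hb
  -- step 1 : c = k / n
  have hv₀ : f i₀ ∈ V := hmem i₀ hi₀
  have hcval : c = (k : ℝ) / n := by
    have h1 := htight (f i₀)
    rw [← Finset.sum_add_sum_compl A] at h1
    have h2 : ∑ i ∈ Aᶜ, ‖(inner 𝕜 (f i₀) (f i) : 𝕜)‖ ^ 2 = 0 := by
      apply Finset.sum_eq_zero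
      intro i hi
      have : (inner 𝕜 (f i₀) (f i) : 𝕜) = 0 :=
        (Submodule.mem_orthogonal V (f i)).mp (horth i (by simpa using hi)) (f i₀) hv₀
      simp [this]
    have h3 := hc (f i₀) hv₀
    rw [hunit i₀] at h1 h3
    simp only [one_pow, mul_one] at h1 h3
    rw [h2, add_zero, h3] at h1
    exact h1
  -- step 2 : trace identity  c * m = A.card
  have htrace : c * m = A.card := by
    have lhs : ∑ j : Fin m, ∑ i ∈ A, ‖(inner 𝕜 ((b j : EuclideanSpace 𝕜 (Fin n))) (f i) : 𝕜)‖ ^ 2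
        = c * m := by
      have : ∀ j : Fin m, ∑ i ∈ A, ‖(inner 𝕜 ((b j : EuclideanSpace 𝕜 (Fin n))) (f i) : 𝕜)‖ ^ 2
          = c := by
        intro j
        have hmemj : ((b j : V) : EuclideanSpace 𝕜 (Fin n)) ∈ V := (b j).2
        have := hc _ hmemj
        have hnj : ‖((b j : V) : EuclideanSpace 𝕜 (Fin n))‖ = 1 := by
          rw [Submodule.norm_coe]
          exact b.orthonormal.1 j
        rw [hnj] at this
        simpa using this
      rw [Finset.sum_congr rfl (fun j _ => this j)]
      simp [mul_comm]
    have rhs : ∑ i ∈ A, ∑ j : Fin m, ‖(inner 𝕜 ((b j : EuclideanSpace 𝕜 (Fin n))) (f i) : 𝕜)‖ ^ 2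
        = A.card := by
      have : ∀ i ∈ A, ∑ j : Fin m, ‖(inner 𝕜 ((b j : EuclideanSpace 𝕜 (Fin n))) (f i) : 𝕜)‖ ^ 2
          = 1 := by
        intro i hi
        have := parseval_sub V ⟨f i, hmem i hi⟩
        simp only [Submodule.coe_mk] at this
        rw [this, hunit i, one_pow]
      rw [Finset.sum_congr rfl this]
      simp
    rw [← lhs, Finset.sum_comm, rhs]
  -- step 3 : natural-number identity
  have hkey : k * m = A.card * n := by
    rw [hcval] at htrace
    have hn' : (n : ℝ) ≠ 0 := Nat.cast_ne_zero.mpr hn.ne'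
    field_simp at htrace
    rw [Nat.mul_comm A.card n]
    exact_mod_cast htrace
  -- step 4 : number theory
  set d := Nat.gcd n k with hd
  have hd0 : 0 < d := Nat.gcd_pos_of_pos_left _ hn
  have hcop : Nat.Coprime (n / d) (k / d) := Nat.coprime_div_gcd_div_gcd hd0
  have hdvd : (k / d) ∣ A.card * (n / d) := by
    refine ⟨m, ?_⟩
    have hdn : d ∣ n := Nat.gcd_dvd_left n k
    have hdk : d ∣ k := Nat.gcd_dvd_right n k
    apply Nat.eq_of_mul_eq_mul_left hd0
    calc d * (A.card * (n / d)) = A.card * (d * (n / d)) := by ring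
      _ = A.card * n := by rw [Nat.mul_div_cancel' hdn]
      _ = k * m := hkey.symm
      _ = (d * (k / d)) * m := by rw [Nat.mul_div_cancel' hdk]
      _ = d * ((k / d) * m) := by ring
  exact Nat.Coprime.dvd_of_dvd_mul_right hcop.symm hdvd

/-- If a spherical tight frame of `k` vectors in `𝕜ⁿ` is orthodecomposable via a subset
`A`, then `|A|` is a multiple of `k' = k / gcd(n,k)`; in particular if `gcd(n,k) = 1`
then no spherical tight frame of `k` vectors in `𝕜ⁿ` is orthodecomposable. -/
theorem stmt16 {𝕜 : Type*} [RCLike 𝕜] {n k : ℕ} (hn : 0 < n) (hk : 0 < k)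
    (f : Fin k → EuclideanSpace 𝕜 (Fin n))
    (hunit : ∀ j, ‖f j‖ = 1)
    (htight : ∀ v : EuclideanSpace 𝕜 (Fin n),
      ∑ j, ‖(inner 𝕜 v (f j) : 𝕜)‖ ^ 2 = ((k : ℝ) / n) * ‖v‖ ^ 2) :
    (∀ A : Finset (Fin k),
      (∃ V : Submodule 𝕜 (EuclideanSpace 𝕜 (Fin n)),
        (∀ i ∈ A, f i ∈ V) ∧ (∀ i ∉ A, f i ∈ Vᗮ) ∧
        (∃ c > (0 : ℝ), ∀ v ∈ V, ∑ i ∈ A, ‖(inner 𝕜 v (f i) : 𝕜)‖ ^ 2 = c * ‖v‖ ^ 2) ∧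
        (∃ c > (0 : ℝ), ∀ v ∈ Vᗮ, ∑ i ∈ Aᶜ, ‖(inner 𝕜 v (f i) : 𝕜)‖ ^ 2 = c * ‖v‖ ^ 2)) →
      (k / Nat.gcd n k) ∣ A.card) ∧
    (Nat.gcd n k = 1 →
      ¬ ∃ A : Finset (Fin k), A ≠ ∅ ∧ A ≠ Finset.univ ∧
        ∃ V : Submodule 𝕜 (EuclideanSpace 𝕜 (Fin n)),
          (∀ i ∈ A, f i ∈ V) ∧ (∀ i ∉ A, f i ∈ Vᗮ) ∧
          (∃ c > (0 : ℝ), ∀ v ∈ V, ∑ i ∈ A, ‖(inner 𝕜 v (f i) : 𝕜)‖ ^ 2 = c * ‖v‖ ^ 2) ∧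
          (∃ c > (0 : ℝ), ∀ v ∈ Vᗮ, ∑ i ∈ Aᶜ, ‖(inner 𝕜 v (f i) : 𝕜)‖ ^ 2 = c * ‖v‖ ^ 2)) := by
  constructor
  · intro A hA
    exact main_step hn hk f hunit htight A hA
  · intro hgcd ⟨A, hne, hnuniv, hA⟩
    have hdvd := main_step hn hk f hunit htight A hA
    rw [hgcd, Nat.div_one] at hdvd
    have hpos : 0 < A.card := Finset.card_pos.mpr (Finset.nonempty_iff_ne_empty.mpr hne)
    have hle : A.card ≤ k := by simpa using A.card_le_univ
    have hcard : A.card = k := Nat.le_antisymm hle (Nat.le_of_dvd hpos hdvd)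
    exact hnuniv (Finset.eq_univ_of_card A (by simpa using hcard))
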